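/- Let Φ denote the standard normal CDF, m ≥ 1, β ∈ (0, 2), and y ∈ ℝ^m. Let |y|_(r) denote the r-th largest value among |y_1|, ..., |y_m|, let P_i = 2(1 − Φ(|y_i|)), and let P_(1) ≤ ... ≤ P_(m) be the ordered values of P_1, ..., P_m. Then for every r ∈ {1,...,m}: Φ^{-1}(1 − rβ/(2m)) ≤ |y|_(r) if and only if P_(r) ≤ rβ/m; consequently max{r : Φ^{-1}(1 − rβ/(2m)) ≤ |y|_(r)} = max{r : P_(r) ≤ rβ/m} (both maxima existing for exactly the same y). In particular, with β = q the selective sign-determining procedure based on the symmetric interval selects exactly the hypotheses rejected by the level-q BH procedure, and with β = 2q the procedure based on the one-sided (or Pratt) interval selects exactly the hypotheses rejected by the level-2q BH procedure. -/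

import Mathlib

/-!
STATEMENT 16: For β ∈ (0, 2), y ∈ ℝ^m, |y|_(r) the r-th largest of |y_1|,...,|y_m|,
P_i = 2(1 − Φ(|y_i|)) and P_(1) ≤ ... ≤ P_(m) the ordered p-values: for every
r ∈ {1,...,m}, Φ⁻¹(1 − rβ/(2m)) ≤ |y|_(r) ⟺ P_(r) ≤ rβ/m; consequently
max{r : Φ⁻¹(1 − rβ/(2m)) ≤ |y|_(r)} = max{r : P_(r) ≤ rβ/m}, both maxima existing
for exactly the same y.
-/

open MeasureTheory ProbabilityTheory

/-- The standard normal cumulative distribution function `Φ`. -/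
noncomputable def Phi : ℝ → ℝ := fun x => ProbabilityTheory.cdf (gaussianReal 0 1) x

/-- The inverse `Φ⁻¹` of the standard normal CDF (junk values off `(0,1)`). -/
noncomputable def PhiInv : ℝ → ℝ := Function.invFun Phi

/-- The `r`-th largest entry of `v` (1-indexed; junk value `0` out of range). -/
noncomputable def kthLargest (m : ℕ) (v : Fin m → ℝ) (r : ℕ) : ℝ :=
  ((List.ofFn v).mergeSort (fun a b => decide (b ≤ a))).getD (r - 1) 0

/-- The `r`-th smallest entry of `v` (1-indexed; junk value `0` out of range). -/
noncomputable def kthSmallest (m : ℕ) (v : Fin m → ℝ) (r : ℕ) : ℝ :=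
  ((List.ofFn v).mergeSort (fun a b => decide (a ≤ b))).getD (r - 1) 0


lemma gaussian_cont : Continuous (gaussianPDFReal 0 1) := by
  rw [gaussianPDFReal_def]; fun_prop

lemma gaussian_pos (x : ℝ) : 0 < gaussianPDFReal 0 1 x :=
  gaussianPDFReal_pos 0 1 x one_ne_zero

lemma gaussian_int : MeasureTheory.Integrable (gaussianPDFReal 0 1) :=
  integrable_gaussianPDFReal 0 1

lemma Phi_eq (x : ℝ) : Phi x = ∫ t in Set.Iic x, gaussianPDFReal 0 1 t := by
  rw [Phi, ProbabilityTheory.cdf_eq_real, measureReal_def,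
    gaussianReal_apply_eq_integral 0 one_ne_zero, ENNReal.toReal_ofReal]
  exact MeasureTheory.setIntegral_nonneg measurableSet_Iic (fun t _ => (gaussian_pos t).le)

lemma Phi_sub (a b : ℝ) : Phi b - Phi a = ∫ t in a..b, gaussianPDFReal 0 1 t := by
  rw [Phi_eq, Phi_eq]
  rw [intervalIntegral.integral_Iic_sub_Iic (μ := volume)
    gaussian_int.integrableOn gaussian_int.integrableOn]

lemma Phi_strictMono : StrictMono Phi := by
  intro a b hab
  have h : 0 < Phi b - Phi a := by
    rw [Phi_sub]
    exact intervalIntegral.intervalIntegral_pos_of_pos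
      gaussian_int.intervalIntegrable gaussian_pos hab
  linarith

lemma Phi_continuous : Continuous Phi := by
  have h : Phi = fun x => (∫ t in (0:ℝ)..x, gaussianPDFReal 0 1 t) + Phi 0 := by
    funext x
    have := Phi_sub 0 x
    linarith
  rw [h]
  exact (gaussian_int.continuous_primitive 0).add continuous_const

lemma Phi_inv_spec {u : ℝ} (h0 : 0 < u) (h1 : u < 1) : Phi (PhiInv u) = u := by
  obtain ⟨a, ha⟩ : ∃ a, Phi a < u :=
    ((ProbabilityTheory.tendsto_cdf_atBot (μ := gaussianReal 0 1)).eventually_lt_const h0).exists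
  obtain ⟨b, hb⟩ : ∃ b, u < Phi b :=
    ((ProbabilityTheory.tendsto_cdf_atTop (μ := gaussianReal 0 1)).eventually_const_lt h1).exists
  obtain ⟨x, hx⟩ := intermediate_value_univ a b Phi_continuous ⟨ha.le, hb.le⟩
  exact Function.invFun_eq ⟨x, hx⟩

lemma PhiInv_le_iff {u a : ℝ} (h0 : 0 < u) (h1 : u < 1) : PhiInv u ≤ a ↔ u ≤ Phi a := by
  rw [← Phi_strictMono.le_iff_le, Phi_inv_spec h0 h1]

lemma mergeSort_map_antitone (f : ℝ → ℝ) (hf : ∀ a b : ℝ, a ≤ b → f b ≤ f a) (l : List ℝ) :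
    ((l.map f).mergeSort (fun a b => decide (a ≤ b))) =
      (l.mergeSort (fun a b => decide (b ≤ a))).map f := by
  refine (fun hp h1 h2 => List.Perm.eq_of_pairwise' (r := ((· ≤ ·) : ℝ → ℝ → Prop)) h1 h2 hp) ?_ ?_ ?_
  · exact (List.mergeSort_perm (l.map f) _).trans ((List.mergeSort_perm l _).map f).symm
  · have h := List.pairwise_mergeSort (le := fun a b : ℝ => decide (a ≤ b))
      (fun a b c hab hbc => by simp_all; exact hab.trans hbc) (fun a b => by simpa using le_total a b) (l.map f)
    exact List.Pairwise.imp (fun h => by simpa using h) h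
  · have h := List.pairwise_mergeSort (le := fun a b : ℝ => decide (b ≤ a))
      (fun a b c hab hbc => by simp_all; exact hbc.trans hab)
      (fun a b => by simpa using le_total b a) l
    exact List.Pairwise.map f (fun a b hab => hf _ _ (by simpa using hab)) h

lemma kthSmallest_map (m r : ℕ) (hr1 : 1 ≤ r) (hrm : r ≤ m) (f : ℝ → ℝ)
    (hf : ∀ a b : ℝ, a ≤ b → f b ≤ f a) (A : Fin m → ℝ) :
    kthSmallest m (fun i => f (A i)) r = f (kthLargest m A r) := by
  unfold kthSmallest kthLargest
  have h1 : List.ofFn (fun i => f (A i)) = (List.ofFn A).map f := by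
    simp only [List.map_ofFn]
    rfl
  rw [h1, mergeSort_map_antitone f hf]
  have hlen : r - 1 < ((List.ofFn A).mergeSort (fun a b => decide (b ≤ a))).length := by
    simp only [List.length_mergeSort, List.length_ofFn]
    omega
  rw [List.getD_eq_getElem _ _ (by simpa using hlen), List.getD_eq_getElem _ _ hlen,
    List.getElem_map]

theorem threshold_iff_bh_pvalue (m : ℕ) (hm : 1 ≤ m) (β : ℝ)
    (hβ : 0 < β) (hβ' : β < 2) (y : Fin m → ℝ) :
    (∀ r ∈ Finset.Icc 1 m,
      (PhiInv (1 - (r : ℝ) * β / (2 * m)) ≤ kthLargest m (fun i => |y i|) r ↔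
        kthSmallest m (fun i => 2 * (1 - Phi |y i|)) r ≤ (r : ℝ) * β / m)) ∧
    ((Finset.Icc 1 m).filter fun r : ℕ =>
        PhiInv (1 - (r : ℝ) * β / (2 * m)) ≤ kthLargest m (fun i => |y i|) r) =
      ((Finset.Icc 1 m).filter fun r : ℕ =>
        kthSmallest m (fun i => 2 * (1 - Phi |y i|)) r ≤ (r : ℝ) * β / m) := by
  have hm0 : (0:ℝ) < m := by exact_mod_cast hm
  have key : ∀ r ∈ Finset.Icc 1 m,
      (PhiInv (1 - (r : ℝ) * β / (2 * m)) ≤ kthLargest m (fun i => |y i|) r ↔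
        kthSmallest m (fun i => 2 * (1 - Phi |y i|)) r ≤ (r : ℝ) * β / m) := by
    intro r hr
    rw [Finset.mem_Icc] at hr
    obtain ⟨hr1, hrm⟩ := hr
    have hr0 : (0:ℝ) < r := by exact_mod_cast hr1
    have hrm' : (r:ℝ) ≤ m := by exact_mod_cast hrm
    have hk : kthSmallest m (fun i => 2 * (1 - Phi |y i|)) r
        = 2 * (1 - Phi (kthLargest m (fun i => |y i|) r)) :=
      kthSmallest_map m r hr1 hrm (fun x => 2 * (1 - Phi x))
        (fun u v huv => by
          have := Phi_strictMono.monotone huv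
          show 2 * (1 - Phi v) ≤ 2 * (1 - Phi u)
          linarith)
        (fun i => |y i|)
    rw [hk]
    have ht0 : 0 < (r:ℝ) * β / (2 * m) := by positivity
    have ht1 : (r:ℝ) * β / (2 * m) < 1 := by
      rw [div_lt_one (by positivity)]
      nlinarith
    rw [PhiInv_le_iff (by linarith) (by linarith)]
    have h2 : (r:ℝ) * β / m = 2 * ((r:ℝ) * β / (2 * m)) := by
      field_simp
    rw [h2]
    constructor <;> intro h <;> linarith
  exact ⟨key, Finset.filter_congr (fun r hr => by rw [key r hr])⟩
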